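/- For every nonnegative integer n and complex number x such that no denominator vanishes, the sum over k from 0 to n of ((3x)_k (2-3x)_k (-n)_k) / (k! (3/2)_k (-1-3n)_k) * (3/4)^k equals ((2/3 + x)_n (4/3 - x)_n) / ((2/3)_n (4/3)_n). (Gosper's second 3F2(3/4) identity.) -/

import Mathlib

/-- Pochhammer symbol (rising factorial) `(a)_k`. -/
noncomputable def poch (a : ℂ) (k : ℕ) : ℂ := ∏ j ∈ Finset.range k, (a + j)

lemma poch_zero (a : ℂ) : poch a 0 = 1 := by simp [poch]

lemma poch_succ (a : ℂ) (k : ℕ) : poch a (k+1) = poch a k * (a + k) := by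
  simp [poch, Finset.prod_range_succ]

lemma poch_shift (a : ℂ) (k : ℕ) : poch (a-1) k * (a-1+k) = (a-1) * poch a k := by
  induction k with
  | zero => simp [poch_zero]
  | succ k ih =>
      rw [poch_succ, poch_succ]
      push_cast
      calc poch (a-1) k * (a-1+k) * (a-1+(k+1))
          = (poch (a-1) k * (a-1+k)) * (a+k) := by ring
        _ = (a-1) * poch a k * (a+k) := by rw [ih]
        _ = (a-1) * (poch a k * (a+k)) := by ring

lemma poch_shift3 (b : ℂ) (k : ℕ) :
    poch (b-3) k * ((b-3+k)*(b-2+k)*(b-1+k)) = (b-3)*(b-2)*(b-1) * poch b k := by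
  have h1 := poch_shift b k
  have h2 := poch_shift (b-1) k
  have h3 := poch_shift (b-2) k
  have e2 : b-1-1 = b-2 := by ring
  have e3 : b-2-1 = b-3 := by ring
  rw [e2] at h2; rw [e3] at h3
  calc poch (b-3) k * ((b-3+k)*(b-2+k)*(b-1+k))
      = (poch (b-3) k * (b-3+k)) * (b-2+k) * (b-1+k) := by ring
    _ = ((b-3) * poch (b-2) k) * (b-2+k) * (b-1+k) := by rw [h3]
    _ = (b-3) * ((poch (b-2) k * (b-2+k)) * (b-1+k)) := by ring
    _ = (b-3) * (((b-2) * poch (b-1) k) * (b-1+k)) := by rw [h2]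
    _ = (b-3) * (b-2) * (poch (b-1) k * (b-1+k)) := by ring
    _ = (b-3) * (b-2) * ((b-1) * poch b k) := by rw [h1]
    _ = (b-3)*(b-2)*(b-1) * poch b k := by ring

lemma poch_ne (a : ℂ) (k : ℕ) (h : ∀ j < k, a + j ≠ 0) : poch a k ≠ 0 :=
  Finset.prod_ne_zero_iff.mpr (fun j hj => h j (Finset.mem_range.mp hj))

lemma poch_eq_zero (a : ℂ) (k j : ℕ) (hj : j < k) (h : a + j = 0) : poch a k = 0 :=
  Finset.prod_eq_zero (Finset.mem_range.mpr hj) h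

lemma intc_ne (z : ℂ) (m : ℤ) (hz : z = m) (hm : m ≠ 0) : z ≠ 0 := by
  rw [hz]; exact_mod_cast hm

lemma fac_ne (k : ℕ) : ((Nat.factorial k : ℕ) : ℂ) ≠ 0 :=
  Nat.cast_ne_zero.mpr (Nat.factorial_ne_zero k)

lemma poch32_ne (k : ℕ) : poch (3/2) k ≠ 0 := by
  refine poch_ne _ _ (fun j _ => ?_)
  intro h0
  have h : ((3 + 2*j : ℕ) : ℂ) ≠ 0 := Nat.cast_ne_zero.mpr (by omega)
  apply h; push_cast; linear_combination 2*h0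

lemma poch13_ne (n k : ℕ) (h : k ≤ 3*n+1) : poch (-1 - 3*(n:ℂ)) k ≠ 0 := by
  refine poch_ne _ _ (fun j hj => ?_)
  exact intc_ne _ ((j:ℤ) - 1 - 3*n) (by push_cast; ring) (by omega)

/-- summand -/
noncomputable def T (x : ℂ) (n k : ℕ) : ℂ :=
  (poch (3*x) k * poch (2 - 3*x) k * poch (-(n : ℂ)) k) /
    ((Nat.factorial k : ℂ) * poch (3/2) k * poch (-1 - 3*n : ℂ) k) * (3/4 : ℂ)^k

/-- WZ certificate companion -/
noncomputable def V (x : ℂ) (n : ℕ) : ℕ → ℂ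
  | 0 => 0
  | (k+1) => 2*((k:ℂ)+1)*(2*((k:ℂ)+1)+1) * poch (3*x) (k+1) * poch (2-3*x) (k+1) *
      poch (-(n:ℂ)-1) (k+1) * (3/4 : ℂ)^(k+1) /
      (27 * ((n:ℂ)+1) * ((Nat.factorial (k+1) : ℕ) : ℂ) * poch (3/2) (k+1) *
        poch (-1 - 3*(n:ℂ)) k)

set_option maxHeartbeats 2000000 in
lemma wz (n : ℕ) (x : ℂ) : ∀ k ≤ n+1,
    ((2:ℂ)/3+n)*((4:ℂ)/3+n) * T x (n+1) k - ((2:ℂ)/3+x+n)*((4:ℂ)/3-x+n) * T x n k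
      = V x n (k+1) - V x n k := by
  intro k hk
  have hn1 : ((n:ℂ)+1) ≠ 0 := intc_ne _ ((n:ℤ)+1) (by push_cast; ring) (by omega)
  match k with
  | 0 =>
      simp only [T, V, poch_zero, poch_succ]
      push_cast
      field_simp
      ring
  | (j+1) =>
      have hj : j ≤ n := by omega
      have hm1 : -(n:ℂ)-1 ≠ 0 :=
        intc_ne _ (-(n:ℤ)-1) (by push_cast; ring) (by omega)
      have hd1 : (j:ℂ)-1-3*n ≠ 0 :=
        intc_ne _ ((j:ℤ)-1-3*n) (by push_cast; ring) (by omega)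
      have hd2 : (j:ℂ)-2-3*n ≠ 0 :=
        intc_ne _ ((j:ℤ)-2-3*n) (by push_cast; ring) (by omega)
      have hd3 : (j:ℂ)-3-3*n ≠ 0 :=
        intc_ne _ ((j:ℤ)-3-3*n) (by push_cast; ring) (by omega)
      have hB2 : poch (3/2) (j+1) ≠ 0 := poch32_ne _
      have hB3 : poch (-1-3*(n:ℂ)) (j+1) ≠ 0 := poch13_ne n (j+1) (by omega)
      have hfac : ((Nat.factorial (j+1) : ℕ) : ℂ) ≠ 0 := fac_ne _
      -- expansion identities
      have hE1 : poch (-(n:ℂ)) (j+1)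
          = poch (-(n:ℂ)-1) (j+1) * ((j:ℂ)-n) / (-(n:ℂ)-1) := by
        rw [eq_div_iff hm1]
        have h := poch_shift (-(n:ℂ)) (j+1)
        push_cast at h
        linear_combination -h
      have hE2 : poch (-4-3*(n:ℂ)) (j+1)
          = ((-4-3*(n:ℂ))*(-3-3*(n:ℂ))*(-2-3*(n:ℂ)) * poch (-1-3*(n:ℂ)) (j+1)) /
              (((j:ℂ)-3-3*n)*((j:ℂ)-2-3*n)*((j:ℂ)-1-3*n)) := by
        rw [eq_div_iff (mul_ne_zero (mul_ne_zero hd3 hd2) hd1)]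
        have h := poch_shift3 (-1-3*(n:ℂ)) (j+1)
        rw [show (-1-3*(n:ℂ))-3 = -4-3*(n:ℂ) by ring] at h
        push_cast at h
        linear_combination h
      have hE3 : poch (-1-3*(n:ℂ)) j
          = poch (-1-3*(n:ℂ)) (j+1) / ((j:ℂ)-1-3*n) := by
        rw [eq_div_iff hd1, poch_succ]
        push_cast
        ring
      simp only [T, V]
      rw [show -(((n+1 : ℕ)) : ℂ) = -(n:ℂ)-1 by push_cast; ring]
      rw [show (-1 - 3*(((n+1:ℕ)) : ℂ)) = -4-3*(n:ℂ) by push_cast; ring]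
      rw [show (-1 - 3*((n:ℕ)) : ℂ) = -1-3*(n:ℂ) by push_cast; ring]
      rw [Nat.factorial_succ (j+1)]
      rw [pow_succ ((3:ℂ)/4) (j+1)]
      rw [poch_succ (3*x) (j+1), poch_succ (2-3*x) (j+1),
          poch_succ (-(n:ℂ)-1) (j+1), poch_succ (3/2) (j+1)]
      rw [hE1, hE2, hE3]
      push_cast
      have h32 : (3/2:ℂ) + ((j:ℂ)+1) ≠ 0 := by
        intro h0
        have h5 : ((5 + 2*j : ℕ) : ℂ) ≠ 0 := Nat.cast_ne_zero.mpr (by omega)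
        apply h5; push_cast; linear_combination 2*h0
      have hjj : (j:ℂ)+1 ≠ 0 := intc_ne _ ((j:ℤ)+1) (by push_cast; ring) (by omega)
      have hjj2 : (j:ℂ)+1+1 ≠ 0 := intc_ne _ ((j:ℤ)+2) (by push_cast; ring) (by omega)
      have hq : ((3:ℂ)/4)^(j+1) ≠ 0 := pow_ne_zero _ (by norm_num)
      have hm2 : (-2-3*(n:ℂ)) ≠ 0 :=
        intc_ne _ (-2-3*(n:ℤ)) (by push_cast; ring) (by omega)
      have hm3 : (-3-3*(n:ℂ)) ≠ 0 :=
        intc_ne _ (-3-3*(n:ℤ)) (by push_cast; ring) (by omega)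
      have hm4 : (-4-3*(n:ℂ)) ≠ 0 :=
        intc_ne _ (-4-3*(n:ℤ)) (by push_cast; ring) (by omega)
      set P1 := poch (3*x) (j+1) with hP1
      set P2 := poch (2-3*x) (j+1) with hP2
      set P3 := poch (-(n:ℂ)-1) (j+1) with hP3
      set B2 := poch (3/2) (j+1) with hB2d
      set B3 := poch (-1-3*(n:ℂ)) (j+1) with hB3d
      set F1 := ((Nat.factorial (j+1) : ℕ) : ℂ) with hF1
      set q := ((3:ℂ)/4)^(j+1) with hqd
      have hbigA : -((n:ℂ) * F1 * B2 * B3 * 9) - F1 * B2 * B3 * 9 ≠ 0 := by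
        have h0 := mul_ne_zero (mul_ne_zero (mul_ne_zero hfac hB2) hB3) hn1
        intro h; apply h0; linear_combination (-1/9 : ℂ) * h
      have hbigB : -((n:ℂ) * F1 * B2 * B3 * 702) - (n:ℂ)^2 * F1 * B2 * B3 * 729 +
          (-((n:ℂ)^3 * F1 * B2 * B3 * 243) - F1 * B2 * B3 * 216) ≠ 0 := by
        have h0 := mul_ne_zero (mul_ne_zero (mul_ne_zero (mul_ne_zero
          (mul_ne_zero (mul_ne_zero hfac hB2) hB3) hn1) hm2) hm3) hm4
        intro h; apply h0; linear_combination (((n:ℂ)+1)/9) * h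
      field_simp [hn1, hm1, hd1, hd2, hd3, h32, hjj, hjj2, hm2, hm3, hm4,
        hB2, hB3, hfac, hq, hbigA, hbigB]
      have h325 : (3:ℂ) + ((j:ℂ)+1)*2 ≠ 0 :=
        intc_ne _ (2*(j:ℤ)+5) (by push_cast; ring) (by omega)
      have hD1 : (3:ℂ) * 3 * (F1 * B2 * ((-4 - 3 * (n:ℂ)) * (-3 - 3 * (n:ℂ)) * (-2 - 3 * (n:ℂ)) * B3)) ≠ 0 :=
        mul_ne_zero (by norm_num)
          (mul_ne_zero (mul_ne_zero hfac hB2)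
            (mul_ne_zero (mul_ne_zero (mul_ne_zero hm4 hm3) hm2) hB3))
      have hD2 : (3:ℂ) * 3 * ((-(n:ℂ) - 1) * (F1 * B2 * B3)) ≠ 0 :=
        mul_ne_zero (by norm_num)
          (mul_ne_zero hm1 (mul_ne_zero (mul_ne_zero hfac hB2) hB3))
      have hD3 : (4:ℂ) * (27 * ((n:ℂ) + 1) * (((j:ℂ) + 1 + 1) * F1) * (B2 * (3 + ((j:ℂ) + 1) * 2)) * B3) ≠ 0 :=
        mul_ne_zero (by norm_num)
          (mul_ne_zero (mul_ne_zero (mul_ne_zero (mul_ne_zero (by norm_num) hn1)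
            (mul_ne_zero hjj2 hfac)) (mul_ne_zero hB2 h325)) hB3)
      have hD4 : (27:ℂ) * ((n:ℂ) + 1) * F1 * B2 * B3 ≠ 0 :=
        mul_ne_zero (mul_ne_zero (mul_ne_zero (mul_ne_zero (by norm_num) hn1) hfac) hB2) hB3
      have hm1' : (-1 - (n:ℂ)) ≠ 0 := by intro h; apply hm1; linear_combination h
      have h325' : (3:ℂ) + 2*((j:ℂ)+1) ≠ 0 := by intro h; apply h325; linear_combination h
      field_simp
      ring

lemma main_id (x : ℂ) : ∀ n : ℕ,
    (∑ k ∈ Finset.range (n+1), T x n k) * (poch (2/3) n * poch (4/3) n)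
      = poch (2/3 + x) n * poch (4/3 - x) n := by
  intro n
  induction n with
  | zero => simp [T, poch_zero]
  | succ n ih =>
      -- telescoping sum of the WZ identity
      have htel : ∑ k ∈ Finset.range (n+1+1), (V x n (k+1) - V x n k)
          = V x n (n+1+1) - V x n 0 := Finset.sum_range_sub (V x n) (n+1+1)
      have hV0 : V x n 0 = 0 := rfl
      have hVend : V x n (n+1+1) = 0 := by
        have hz : poch (-(n:ℂ)-1) (n+1+1) = 0 := by
          refine poch_eq_zero _ _ (n+1) (by omega) ?_
          push_cast; ring
        simp only [V, hz]
        simp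
      have hsum : ∑ k ∈ Finset.range (n+1+1),
          (((2:ℂ)/3+n)*((4:ℂ)/3+n) * T x (n+1) k
            - ((2:ℂ)/3+x+n)*((4:ℂ)/3-x+n) * T x n k) = 0 := by
        rw [Finset.sum_congr rfl (fun k hkmem => wz n x k (by
          have := Finset.mem_range.mp hkmem; omega))]
        rw [htel, hV0, hVend]; ring
      have hTtop : T x n (n+1) = 0 := by
        have hz : poch (-(n:ℂ)) (n+1) = 0 := by
          refine poch_eq_zero _ _ n (by omega) ?_
          push_cast; ring
        simp [T, hz]
      have hstep : ((2:ℂ)/3+n)*((4:ℂ)/3+n) * ∑ k ∈ Finset.range (n+1+1), T x (n+1) k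
          = ((2:ℂ)/3+x+n)*((4:ℂ)/3-x+n) * ∑ k ∈ Finset.range (n+1), T x n k := by
        rw [Finset.sum_sub_distrib, ← Finset.mul_sum, ← Finset.mul_sum] at hsum
        rw [Finset.sum_range_succ (T x n) (n+1), hTtop] at hsum
        rw [add_zero] at hsum
        linear_combination hsum
      rw [poch_succ (2/3) n, poch_succ (4/3) n, poch_succ (2/3+x) n, poch_succ (4/3-x) n]
      linear_combination (poch (2/3) n * poch (4/3) n) * hstep
        + ((2:ℂ)/3+x+n)*((4:ℂ)/3-x+n) * ih

theorem gosper_second_3F2 (n : ℕ) (x : ℂ)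
    (hden : ∀ k ≤ n, poch (3/2) k ≠ 0 ∧ poch (-1 - 3*n : ℂ) k ≠ 0)
    (h23 : poch (2/3) n ≠ 0) (h43 : poch (4/3) n ≠ 0) :
    ∑ k ∈ Finset.range (n+1),
      (poch (3*x) k * poch (2 - 3*x) k * poch (-(n : ℂ)) k) /
        ((Nat.factorial k : ℂ) * poch (3/2) k * poch (-1 - 3*n : ℂ) k) * (3/4 : ℂ)^k
      = (poch (2/3 + x) n * poch (4/3 - x) n) / (poch (2/3) n * poch (4/3) n) := by
  rw [eq_div_iff (mul_ne_zero h23 h43)]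
  exact main_id x n
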